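/- For any symmetric Pauli string Q ∈ P_n (Qᵀ = Q), there exists a unitary 2ⁿ×2ⁿ matrix U such that U Q Uᵀ = I^{⊗n}. For any antisymmetric Pauli string Q (Qᵀ = −Q), there exists a unitary U such that U Q Uᵀ = Y⊗I^{⊗(n−1)}. -/

import Mathlib

open Matrix

noncomputable def pauli : Fin 4 → Matrix (Fin 2) (Fin 2) ℂ :=
  ![1, !![0, 1; 1, 0], !![0, -Complex.I; Complex.I, 0], !![1, 0; 0, -1]]

noncomputable def pauliString {n : ℕ} (s : Fin n → Fin 4) :
    Matrix (Fin n → Fin 2) (Fin n → Fin 2) ℂ :=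
  Matrix.of fun v w => ∏ j, pauli (s j) (v j) (w j)

def PauliStrings (n : ℕ) : Set (Matrix (Fin n → Fin 2) (Fin n → Fin 2) ℂ) :=
  Set.range (pauliString (n := n))


lemma pauli_zero : pauli 0 = 1 := rfl

lemma pauli_sq (k : Fin 4) : pauli k * pauli k = 1 := by
  fin_cases k <;>
    norm_num [pauli, Matrix.mul_fin_two, Matrix.one_fin_two, Complex.ext_iff] <;> exact Matrix.one_fin_two.symm

lemma pauli_star (k : Fin 4) (a b : Fin 2) :
    (starRingEnd ℂ) (pauli k a b) = pauli k b a := by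
  fin_cases k <;> fin_cases a <;> fin_cases b <;> simp [pauli]

lemma pauli_two_symm (a b : Fin 2) : pauli 2 a b = -pauli 2 b a := by
  fin_cases a <;> fin_cases b <;> simp [pauli]

lemma pauli_zero_symm (a b : Fin 2) : pauli 0 a b = pauli 0 b a := by
  fin_cases a <;> fin_cases b <;> simp [pauli]

lemma pauli_two_comm (k : Fin 4) :
    pauli 2 * pauli k = pauli k * pauli 2 ∨ pauli 2 * pauli k = -(pauli k * pauli 2) := by
  fin_cases k
  · left; simp [pauli]
  · right; simp [pauli]
  · left; rfl
  · right; simp [pauli]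

lemma pauliString_mul {n : ℕ} (s t : Fin n → Fin 4) :
    pauliString s * pauliString t =
      Matrix.of fun v w => ∏ j, (pauli (s j) * pauli (t j)) (v j) (w j) := by
  ext v w
  simp only [Matrix.mul_apply, pauliString, Matrix.of_apply]
  rw [Finset.prod_univ_sum]
  rw [← Fintype.piFinset_univ]
  exact Finset.sum_congr rfl fun u _ => (Finset.prod_mul_distrib).symm

lemma prod_one_apply {n : ℕ} (v w : Fin n → Fin 2) :
    (∏ j, (1 : Matrix (Fin 2) (Fin 2) ℂ) (v j) (w j)) = (1 : Matrix (Fin n → Fin 2) (Fin n → Fin 2) ℂ) v w := by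
  by_cases h : v = w
  · subst h; simp [Matrix.one_apply]
  · rw [Matrix.one_apply_ne h]
    obtain ⟨j, hj⟩ := Function.ne_iff.mp h
    exact Finset.prod_eq_zero (Finset.mem_univ j) (Matrix.one_apply_ne hj)

variable {m : Type*} [Fintype m] [DecidableEq m]

lemma unitary_congr_of_comm (Q R : Matrix m m ℂ)
    (hQ2 : Q * Q = 1) (hR2 : R * R = 1) (hQH : Qᴴ = Q) (hRH : Rᴴ = R)
    (hT : (R * Q)ᵀ = R * Q) (hcomm : R * Q = Q * R) :
    ∃ U : Matrix m m ℂ, U * Uᴴ = 1 ∧ Uᴴ * U = 1 ∧ U * Q * Uᵀ = R := by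
  have hS2 : R * Q * (R * Q) = 1 := by
    have e : R * Q * (R * Q) = R * (Q * R) * Q := by noncomm_ring
    rw [e, ← hcomm]
    have e2 : R * (R * Q) * Q = R * R * (Q * Q) := by noncomm_ring
    rw [e2, hR2, hQ2, one_mul]
  have hSH : (R * Q)ᴴ = R * Q := by
    rw [Matrix.conjTranspose_mul, hQH, hRH, ← hcomm]
  have hSQ : R * Q * Q = R := by rw [mul_assoc, hQ2, mul_one]
  have hQS : Q * (R * Q) = R := by
    rw [hcomm, ← mul_assoc, hQ2, one_mul]
  have hSQS : R * Q * Q * (R * Q) = Q := by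
    rw [hSQ, ← mul_assoc, hR2, one_mul]
  set c : ℂ := (1 - Complex.I) / 2 with hc
  have hstarc : star c = (1 + Complex.I) / 2 := by
    simp [hc, Complex.star_def, map_div₀, Complex.ext_iff]
  refine ⟨c • (1 + Complex.I • (R * Q)), ?_, ?_, ?_⟩ <;>
    [skip; skip; skip]
  case _ =>
    have hUH : (c • (1 + Complex.I • (R * Q)))ᴴ = star c • (1 - Complex.I • (R * Q)) := by
      simp [Matrix.conjTranspose_smul, Matrix.conjTranspose_add, hSH, Complex.conj_I,
        sub_eq_add_neg, neg_smul]
    rw [hUH]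
    simp only [smul_mul_assoc, mul_smul_comm, mul_add, add_mul, mul_sub, sub_mul,
      one_mul, mul_one, smul_smul, smul_add, smul_sub, hS2]
    rw [hstarc]
    match_scalars <;> simp [Complex.ext_iff, hc] <;> ring_nf <;> norm_num
  case _ =>
    have hUH : (c • (1 + Complex.I • (R * Q)))ᴴ = star c • (1 - Complex.I • (R * Q)) := by
      simp [Matrix.conjTranspose_smul, Matrix.conjTranspose_add, hSH, Complex.conj_I,
        sub_eq_add_neg, neg_smul]
    rw [hUH]
    simp only [smul_mul_assoc, mul_smul_comm, mul_add, add_mul, mul_sub, sub_mul,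
      one_mul, mul_one, smul_smul, smul_add, smul_sub, hS2]
    rw [hstarc]
    match_scalars <;> simp [Complex.ext_iff, hc] <;> ring_nf <;> norm_num
  case _ =>
    have hUT : (c • (1 + Complex.I • (R * Q)))ᵀ = c • (1 + Complex.I • (R * Q)) := by
      simp [Matrix.transpose_smul, Matrix.transpose_add, hT]
    rw [hUT]
    have hQRQ : Q * R * Q = R := by rw [← hcomm, hSQ]
    have hRRQ : R * R * Q = Q := by rw [hR2, one_mul]
    simp only [smul_mul_assoc, mul_smul_comm, mul_add, add_mul,
      one_mul, mul_one, smul_smul, smul_add, ← mul_assoc, hSQ, hQRQ, hRRQ]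
    match_scalars <;> simp [Complex.ext_iff, hc] <;> ring_nf <;> norm_num

lemma unitary_congr_of_anticomm (Q R : Matrix m m ℂ)
    (hQ2 : Q * Q = 1) (hR2 : R * R = 1) (hQH : Qᴴ = Q) (hRH : Rᴴ = R)
    (hQT : Qᵀ = -Q) (hRT : Rᵀ = -R) (hA : R * Q = -(Q * R)) :
    ∃ U : Matrix m m ℂ, U * Uᴴ = 1 ∧ Uᴴ * U = 1 ∧ U * Q * Uᵀ = R := by
  set d : ℂ := ((Real.sqrt 2 : ℝ) : ℂ) / 2 with hdd
  have hd2 : d * d = 1 / 2 := by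
    rw [hdd, div_mul_div_comm, ← Complex.ofReal_mul,
      Real.mul_self_sqrt (by norm_num : (0:ℝ) ≤ 2)]
    norm_num
  have hds : star d = d := by
    rw [hdd]
    simp [Complex.star_def, map_div₀, Complex.conj_ofReal]
  have hS2 : R * Q * (R * Q) = -1 := by
    have e : R * Q * (R * Q) = R * (Q * R) * Q := by noncomm_ring
    have e2 : R * (R * Q) * Q = R * R * (Q * Q) := by noncomm_ring
    rw [e, ← neg_neg (Q * R), ← hA]
    rw [mul_neg, neg_mul, e2, hR2, hQ2, one_mul]
  have hA' : Q * R = -(R * Q) := by rw [hA, neg_neg]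
  have hSH : (R * Q)ᴴ = -(R * Q) := by
    rw [Matrix.conjTranspose_mul, hQH, hRH, hA']
  have hST : (R * Q)ᵀ = -(R * Q) := by
    rw [Matrix.transpose_mul, hQT, hRT, neg_mul, mul_neg, neg_neg, hA']
  have hSQ : R * Q * Q = R := by rw [mul_assoc, hQ2, mul_one]
  have hQRQ : Q * R * Q = -R := by
    rw [hA', neg_mul, hSQ]
  have hRRQ : R * R * Q = Q := by rw [hR2, one_mul]
  refine ⟨d • (1 + R * Q), ?_, ?_, ?_⟩
  case _ =>
    have hUH : (d • (1 + R * Q))ᴴ = d • (1 - R * Q) := by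
      simp [Matrix.conjTranspose_smul, Matrix.conjTranspose_add, hSH, hds, sub_eq_add_neg]
    rw [hUH]
    simp only [smul_mul_assoc, mul_smul_comm, mul_add, add_mul, mul_sub, sub_mul,
      one_mul, mul_one, smul_smul, smul_add, smul_sub, hS2, hd2]
    match_scalars <;> simp [Complex.ext_iff] <;> ring_nf <;> norm_num
  case _ =>
    have hUH : (d • (1 + R * Q))ᴴ = d • (1 - R * Q) := by
      simp [Matrix.conjTranspose_smul, Matrix.conjTranspose_add, hSH, hds, sub_eq_add_neg]
    rw [hUH]
    simp only [smul_mul_assoc, mul_smul_comm, mul_add, add_mul, mul_sub, sub_mul,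
      one_mul, mul_one, smul_smul, smul_add, smul_sub, hS2, hd2]
    match_scalars <;> simp [Complex.ext_iff] <;> ring_nf <;> norm_num
  case _ =>
    have hUT : (d • (1 + R * Q))ᵀ = d • (1 - R * Q) := by
      simp [Matrix.transpose_smul, Matrix.transpose_add, hST, sub_eq_add_neg]
    rw [hUT]
    simp only [smul_mul_assoc, mul_smul_comm, mul_add, add_mul, mul_sub, sub_mul,
      one_mul, mul_one, smul_smul, smul_add, smul_sub, ← mul_assoc, hSQ, hQRQ, hRRQ,
      mul_neg, neg_mul, smul_neg, hd2]
    match_scalars <;> simp [Complex.ext_iff] <;> ring_nf <;> norm_num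

lemma pauliString_sq {n : ℕ} (s : Fin n → Fin 4) :
    pauliString s * pauliString s = 1 := by
  rw [pauliString_mul]
  ext v w
  simp only [Matrix.of_apply, pauli_sq]
  exact prod_one_apply v w

lemma pauliString_herm {n : ℕ} (s : Fin n → Fin 4) :
    (pauliString s)ᴴ = pauliString s := by
  ext v w
  simp only [Matrix.conjTranspose_apply, pauliString, Matrix.of_apply]
  rw [show (star (∏ j, pauli (s j) (w j) (v j)) : ℂ)
      = (starRingEnd ℂ) (∏ j, pauli (s j) (w j) (v j)) from rfl, map_prod]
  exact Finset.prod_congr rfl fun j _ => pauli_star (s j) (w j) (v j)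

def rstr (n : ℕ) : Fin n → Fin 4 := fun j => if (j : ℕ) = 0 then 2 else 0

lemma rstr_ne {n : ℕ} (j : Fin (n+1)) (hj : j ≠ 0) : pauli (rstr (n+1) j) = 1 := by
  have : (j : ℕ) ≠ 0 := fun h => hj (Fin.ext h)
  simp [rstr, this, pauli_zero]

lemma rstr_zero {n : ℕ} : rstr (n+1) 0 = 2 := by simp [rstr]

lemma rstr_transpose {n : ℕ} :
    (pauliString (rstr (n+1)))ᵀ = -pauliString (rstr (n+1)) := by
  ext v w
  simp only [Matrix.transpose_apply, Matrix.neg_apply, pauliString, Matrix.of_apply]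
  rw [← Finset.mul_prod_erase Finset.univ _ (Finset.mem_univ 0),
    ← Finset.mul_prod_erase Finset.univ (fun j => pauli (rstr (n+1) j) (v j) (w j)) (Finset.mem_univ 0)]
  rw [rstr_zero, pauli_two_symm (w 0) (v 0)]
  rw [neg_mul, neg_inj]
  congr 1
  refine Finset.prod_congr rfl fun j hj => ?_
  have hj0 : j ≠ 0 := (Finset.mem_erase.mp hj).1
  rw [rstr_ne j hj0]
  rw [Matrix.one_apply, Matrix.one_apply]
  simp [eq_comm]

lemma rstr_comm {n : ℕ} (s : Fin (n+1) → Fin 4) :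
    pauliString (rstr (n+1)) * pauliString s = pauliString s * pauliString (rstr (n+1)) ∨
    pauliString (rstr (n+1)) * pauliString s = -(pauliString s * pauliString (rstr (n+1))) := by
  rw [pauliString_mul, pauliString_mul]
  have hne : ∀ j : Fin (n+1), j ≠ 0 →
      pauli (rstr (n+1) j) * pauli (s j) = pauli (s j) * pauli (rstr (n+1) j) := by
    intro j hj; rw [rstr_ne j hj, one_mul, mul_one]
  rcases pauli_two_comm (s 0) with h | h
  · left
    ext v w
    simp only [Matrix.of_apply]
    refine Finset.prod_congr rfl fun j _ => ?_
    by_cases hj : j = 0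
    · subst hj; rw [rstr_zero, h]
    · rw [hne j hj]
  · right
    ext v w
    simp only [Matrix.of_apply, Matrix.neg_apply]
    rw [← Finset.mul_prod_erase Finset.univ _ (Finset.mem_univ 0),
      ← Finset.mul_prod_erase Finset.univ
        (fun j => (pauli (s j) * pauli (rstr (n+1) j)) (v j) (w j)) (Finset.mem_univ 0)]
    rw [rstr_zero, h, Matrix.neg_apply]
    rw [neg_mul, neg_inj]
    congr 1
    refine Finset.prod_congr rfl fun j hj => ?_
    rw [hne j (Finset.mem_erase.mp hj).1]

/-- Any symmetric Pauli string can be brought to the identity, and any antisymmetric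
Pauli string to `Y⊗I^{⊗(n−1)}`, by a transformation `Q ↦ U Q Uᵀ` with `U` unitary. -/
theorem pauliString_congr_normal_form (n : ℕ)
    (Q : Matrix (Fin n → Fin 2) (Fin n → Fin 2) ℂ) (hQ : Q ∈ PauliStrings n) :
    (Qᵀ = Q → ∃ U : Matrix (Fin n → Fin 2) (Fin n → Fin 2) ℂ,
        U * Uᴴ = 1 ∧ Uᴴ * U = 1 ∧ U * Q * Uᵀ = 1) ∧
    (Qᵀ = -Q → ∃ U : Matrix (Fin n → Fin 2) (Fin n → Fin 2) ℂ,
        U * Uᴴ = 1 ∧ Uᴴ * U = 1 ∧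
          U * Q * Uᵀ = pauliString (fun j => if (j : ℕ) = 0 then 2 else 0)) := by
  obtain ⟨s, rfl⟩ := hQ
  constructor
  · intro hsym
    have h := unitary_congr_of_comm (pauliString s) 1 (pauliString_sq s) (by rw [one_mul])
      (pauliString_herm s) (Matrix.conjTranspose_one) (by rw [one_mul]; exact hsym)
      (by rw [one_mul, mul_one])
    exact h
  · intro hanti
    rcases n with _ | m
    · exfalso
      have hv : pauliString s (fun x => x.elim0) (fun x => x.elim0) = 1 := by
        simp [pauliString]
      have h2 : (pauliString s)ᵀ (fun x => x.elim0) (fun x => x.elim0)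
          = (-(pauliString s)) (fun x => x.elim0) (fun x => x.elim0) := by rw [hanti]
      rw [Matrix.transpose_apply, Matrix.neg_apply, hv] at h2
      norm_num at h2
    · have hQ2 := pauliString_sq s
      have hQH := pauliString_herm s
      have hR2 := pauliString_sq (rstr (m+1))
      have hRH := pauliString_herm (rstr (m+1))
      have hRT := rstr_transpose (n := m)
      rcases rstr_comm s with hcomm | hA
      · have hT : (pauliString (rstr (m+1)) * pauliString s)ᵀ
            = pauliString (rstr (m+1)) * pauliString s := by
          rw [Matrix.transpose_mul, hanti, hRT, neg_mul, mul_neg, neg_neg, ← hcomm]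
        exact unitary_congr_of_comm _ _ hQ2 hR2 hQH hRH hT hcomm
      · exact unitary_congr_of_anticomm _ _ hQ2 hR2 hQH hRH hanti hRT hA
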